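/- Let 0 < δ < 1, let Δ = {t ∈ ℂ : |t| < 1} be the open unit disc, and let A_δ = {p ∈ ℂ : δ < |p| < 1}. Then the map π : Δ × A_δ → Δ, (t, p) ↦ |p|·t, is a locally trivial fibration with fiber A_δ: every point s₀ ∈ Δ has an open neighborhood U ⊆ Δ together with a homeomorphism from π⁻¹(U) onto U × A_δ whose composition with the first projection equals π. (The claim of Section 1.3 that the restriction of π to Δ × D₀^δ is a locally trivial fibration.) -/

import Mathlib

/-- The open unit disc `Δ = {t ∈ ℂ : |t| < 1}`. -/
def unitDisc : Set ℂ := {t : ℂ | ‖t‖ < 1}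

/-- The open annulus `A_δ = {p ∈ ℂ : δ < |p| < 1}`. -/
def annulus (δ : ℝ) : Set ℂ := {p : ℂ | δ < ‖p‖ ∧ ‖p‖ < 1}

/-- The map `π : Δ × A_δ → Δ`, `(t, p) ↦ |p|·t` of Section 1.3. -/
noncomputable def piMap (δ : ℝ) : unitDisc × annulus δ → unitDisc := fun x =>
  ⟨(‖(x.2 : ℂ)‖ : ℂ) * (x.1 : ℂ), by
    have h1 : ‖(x.1 : ℂ)‖ < 1 := x.1.2
    have h2 : ‖(x.2 : ℂ)‖ < 1 := x.2.2.2
    have : ‖(‖(x.2 : ℂ)‖ : ℂ) * (x.1 : ℂ)‖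
        = ‖(x.2 : ℂ)‖ * ‖(x.1 : ℂ)‖ := by
      rw [norm_mul, Complex.norm_real, norm_norm]
    show ‖_‖ < 1
    rw [this]
    calc ‖(x.2 : ℂ)‖ * ‖(x.1 : ℂ)‖
        < 1 * 1 := by
          exact mul_lt_mul'' h2 h1 (norm_nonneg _) (norm_nonneg _)
      _ = 1 := one_mul 1⟩

/-- Radial rescaling used in the trivialization: affine map sending
`(max δ σ, 1)` onto `(δ, 1)`. -/
noncomputable def lamF (δ σ r : ℝ) : ℝ := δ + (1 - δ) * (r - max δ σ) / (1 - max δ σ)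

/-- Inverse radial rescaling: affine map sending `(δ, 1)` onto `(max δ σ, 1)`. -/
noncomputable def muF (δ σ u : ℝ) : ℝ := max δ σ + (1 - max δ σ) * (u - δ) / (1 - δ)

lemma lamF_bounds {δ σ r : ℝ} (hδ0 : 0 < δ) (hδ1 : δ < 1) (hσ : σ < 1)
    (h1 : max δ σ < r) (h2 : r < 1) : δ < lamF δ σ r ∧ lamF δ σ r < 1 := by
  have hm1 : max δ σ < 1 := max_lt hδ1 hσ
  have ha : 0 < 1 - max δ σ := by linarith
  constructor
  · have : 0 < (1 - δ) * (r - max δ σ) / (1 - max δ σ) :=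
      div_pos (mul_pos (by linarith) (by linarith)) ha
    unfold lamF; linarith
  · have h3 : (r - max δ σ) / (1 - max δ σ) < 1 := (div_lt_one ha).mpr (by linarith)
    unfold lamF
    rw [mul_div_assoc]
    nlinarith

lemma muF_bounds {δ σ u : ℝ} (hδ0 : 0 < δ) (hδ1 : δ < 1) (hσ : σ < 1)
    (h1 : δ < u) (h2 : u < 1) : max δ σ < muF δ σ u ∧ muF δ σ u < 1 := by
  have hm1 : max δ σ < 1 := max_lt hδ1 hσ
  have ha : 0 < 1 - max δ σ := by linarith
  have hb : 0 < 1 - δ := by linarith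
  constructor
  · have : 0 < (1 - max δ σ) * (u - δ) / (1 - δ) :=
      div_pos (mul_pos ha (by linarith)) hb
    unfold muF; linarith
  · have h3 : (u - δ) / (1 - δ) < 1 := (div_lt_one hb).mpr (by linarith)
    unfold muF
    rw [mul_div_assoc]
    nlinarith

lemma muF_lamF {δ σ r : ℝ} (hδ1 : δ < 1) (hσ : σ < 1) :
    muF δ σ (lamF δ σ r) = r := by
  have h1 : (1 : ℝ) - max δ σ ≠ 0 := by
    have : max δ σ < 1 := max_lt hδ1 hσ
    intro h; linarith
  have h2 : (1 : ℝ) - δ ≠ 0 := by intro h; linarith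
  unfold lamF muF
  field_simp
  ring

lemma lamF_muF {δ σ u : ℝ} (hδ1 : δ < 1) (hσ : σ < 1) :
    lamF δ σ (muF δ σ u) = u := by
  have h1 : (1 : ℝ) - max δ σ ≠ 0 := by
    have : max δ σ < 1 := max_lt hδ1 hσ
    intro h; linarith
  have h2 : (1 : ℝ) - δ ≠ 0 := by intro h; linarith
  unfold lamF muF
  field_simp
  ring

lemma abs_real_mul (c : ℝ) (hc : 0 ≤ c) (z : ℂ) :
    ‖((c : ℂ) * z)‖ = c * ‖z‖ := by
  rw [norm_mul, Complex.norm_real, Real.norm_of_nonneg hc]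

section Triv

variable (δ : ℝ) (hδ0 : 0 < δ) (hδ1 : δ < 1)

/-- Forward map of the trivialization. -/
noncomputable def fwd (x : unitDisc × annulus δ) : unitDisc × annulus δ :=
  (piMap δ x,
   ⟨((lamF δ (‖(x.2 : ℂ)‖ * ‖(x.1 : ℂ)‖) (‖(x.2 : ℂ)‖)
        / ‖(x.2 : ℂ)‖ : ℝ) : ℂ) * (x.2 : ℂ), by
      obtain ⟨⟨t, ht⟩, ⟨p, hp⟩⟩ := x
      have ht1 : ‖t‖ < 1 := ht
      have hpδ : δ < ‖p‖ := hp.1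
      have hp1 : ‖p‖ < 1 := hp.2
      have hp0 : (0 : ℝ) < ‖p‖ := lt_trans hδ0 hpδ
      have hσ : ‖p‖ * ‖t‖ < 1 := by
        nlinarith [norm_nonneg t, norm_nonneg p]
      have hmax : max δ (‖p‖ * ‖t‖) < ‖p‖ :=
        max_lt hpδ (mul_lt_of_lt_one_right hp0 ht1)
      obtain ⟨hL1, hL2⟩ := lamF_bounds hδ0 hδ1 hσ hmax hp1
      have habs : ‖(((lamF δ (‖p‖ * ‖t‖) (‖p‖)
              / ‖p‖ : ℝ) : ℂ) * p)‖
          = lamF δ (‖p‖ * ‖t‖) (‖p‖) := by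
        rw [abs_real_mul _ (div_nonneg (le_of_lt (lt_trans hδ0 hL1)) (le_of_lt hp0)),
          div_mul_cancel₀ _ (ne_of_gt hp0)]
      exact ⟨by rw [habs]; exact hL1, by rw [habs]; exact hL2⟩⟩)

/-- Backward map of the trivialization. -/
noncomputable def bwd (y : unitDisc × annulus δ) : unitDisc × annulus δ :=
  (⟨(y.1 : ℂ) / ((muF δ (‖(y.1 : ℂ)‖) (‖(y.2 : ℂ)‖) : ℝ) : ℂ), by
      obtain ⟨⟨s, hs⟩, ⟨q, hq⟩⟩ := y
      have hs1 : ‖s‖ < 1 := hs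
      obtain ⟨hr1, hr2⟩ := muF_bounds (σ := ‖s‖) hδ0 hδ1 hs1 hq.1 hq.2
      have hr0 : (0 : ℝ) < muF δ (‖s‖) (‖q‖) :=
        lt_of_lt_of_le hδ0 (le_trans (le_max_left _ _) (le_of_lt hr1))
      show ‖_‖ < 1
      rw [norm_div, Complex.norm_real, Real.norm_of_nonneg (le_of_lt hr0)]
      rw [div_lt_one hr0]
      exact lt_of_le_of_lt (le_max_right δ _) hr1⟩,
   ⟨((muF δ (‖(y.1 : ℂ)‖) (‖(y.2 : ℂ)‖)
        / ‖(y.2 : ℂ)‖ : ℝ) : ℂ) * (y.2 : ℂ), by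
      obtain ⟨⟨s, hs⟩, ⟨q, hq⟩⟩ := y
      have hs1 : ‖s‖ < 1 := hs
      obtain ⟨hr1, hr2⟩ := muF_bounds (σ := ‖s‖) hδ0 hδ1 hs1 hq.1 hq.2
      have hq0 : (0 : ℝ) < ‖q‖ := lt_trans hδ0 hq.1
      have hr0 : (0 : ℝ) < muF δ (‖s‖) (‖q‖) :=
        lt_of_lt_of_le hδ0 (le_trans (le_max_left _ _) (le_of_lt hr1))
      have habs : ‖(((muF δ (‖s‖) (‖q‖) / ‖q‖ : ℝ) : ℂ) * q)‖
          = muF δ (‖s‖) (‖q‖) := by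
        rw [abs_real_mul _ (div_nonneg (le_of_lt hr0) (le_of_lt hq0)),
          div_mul_cancel₀ _ (ne_of_gt hq0)]
      refine ⟨?_, ?_⟩
      · rw [habs]; exact lt_of_le_of_lt (le_max_left δ _) hr1
      · rw [habs]; exact hr2⟩)

lemma abs_piMap (x : unitDisc × annulus δ) :
    ‖((piMap δ x : ℂ))‖ = ‖(x.2 : ℂ)‖ * ‖(x.1 : ℂ)‖ := by
  show ‖((‖(x.2 : ℂ)‖ : ℂ) * (x.1 : ℂ))‖ = _
  rw [abs_real_mul _ (norm_nonneg _)]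

lemma fwd_bwd (x : unitDisc × annulus δ) : bwd δ hδ0 hδ1 (fwd δ hδ0 hδ1 x) = x := by
  obtain ⟨⟨t, ht⟩, ⟨p, hp⟩⟩ := x
  have ht1 : ‖t‖ < 1 := ht
  have hpδ : δ < ‖p‖ := hp.1
  have hp1 : ‖p‖ < 1 := hp.2
  have hp0 : (0 : ℝ) < ‖p‖ := lt_trans hδ0 hpδ
  have hσ : ‖p‖ * ‖t‖ < 1 := by
    nlinarith [norm_nonneg t, norm_nonneg p]
  have hmax : max δ (‖p‖ * ‖t‖) < ‖p‖ :=
    max_lt hpδ (mul_lt_of_lt_one_right hp0 ht1)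
  obtain ⟨hL1, hL2⟩ := lamF_bounds hδ0 hδ1 hσ hmax hp1
  set L := lamF δ (‖p‖ * ‖t‖) (‖p‖) with hLdef
  have hL0 : (0 : ℝ) < L := lt_trans hδ0 hL1
  -- abs of the first component of fwd
  have hs_abs : ‖((‖p‖ : ℂ) * t)‖ = ‖p‖ * ‖t‖ := by
    rw [abs_real_mul _ (norm_nonneg _)]
  -- abs of the second component of fwd
  have hq_abs : ‖(((L / ‖p‖ : ℝ) : ℂ) * p)‖ = L := by
    rw [abs_real_mul _ (div_nonneg (le_of_lt hL0) (le_of_lt hp0)),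
      div_mul_cancel₀ _ (ne_of_gt hp0)]
  have hr : muF δ (‖p‖ * ‖t‖) L = ‖p‖ :=
    muF_lamF hδ1 hσ
  apply Prod.ext
  · apply Subtype.ext
    show ((‖p‖ : ℂ) * t) /
        ((muF δ (‖((‖p‖ : ℂ) * t)‖)
          (‖(((L / ‖p‖ : ℝ) : ℂ) * p)‖) : ℝ) : ℂ) = t
    rw [hs_abs, hq_abs, hr]
    rw [mul_div_assoc, mul_comm, div_mul_cancel₀]
    exact Complex.ofReal_ne_zero.mpr (ne_of_gt hp0)
  · apply Subtype.ext
    show ((muF δ (‖((‖p‖ : ℂ) * t)‖)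
          (‖(((L / ‖p‖ : ℝ) : ℂ) * p)‖)
          / ‖(((L / ‖p‖ : ℝ) : ℂ) * p)‖ : ℝ) : ℂ)
        * (((L / ‖p‖ : ℝ) : ℂ) * p) = p
    rw [hs_abs, hq_abs, hr, ← mul_assoc, ← Complex.ofReal_mul]
    have : ‖p‖ / L * (L / ‖p‖) = 1 := by
      field_simp
    rw [this]
    simp

lemma bwd_fwd (y : unitDisc × annulus δ) : fwd δ hδ0 hδ1 (bwd δ hδ0 hδ1 y) = y := by
  obtain ⟨⟨s, hs⟩, ⟨q, hq⟩⟩ := y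
  have hs1 : ‖s‖ < 1 := hs
  have hq0 : (0 : ℝ) < ‖q‖ := lt_trans hδ0 hq.1
  obtain ⟨hr1, hr2⟩ := muF_bounds (σ := ‖s‖) hδ0 hδ1 hs1 hq.1 hq.2
  set r := muF δ (‖s‖) (‖q‖) with hrdef
  have hr0 : (0 : ℝ) < r :=
    lt_of_lt_of_le hδ0 (le_trans (le_max_left _ _) (le_of_lt hr1))
  have hsr : ‖s‖ < r := lt_of_le_of_lt (le_max_right δ _) hr1
  -- abs of the components of bwd
  have ht_abs : ‖(s / ((r : ℝ) : ℂ))‖ = ‖s‖ / r := by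
    rw [norm_div, Complex.norm_real, Real.norm_of_nonneg (le_of_lt hr0)]
  have hp_abs : ‖(((r / ‖q‖ : ℝ) : ℂ) * q)‖ = r := by
    rw [abs_real_mul _ (div_nonneg (le_of_lt hr0) (le_of_lt hq0)),
      div_mul_cancel₀ _ (ne_of_gt hq0)]
  have hσ' : r * (‖s‖ / r) = ‖s‖ := by
    field_simp
  have hL : lamF δ (‖s‖) r = ‖q‖ := lamF_muF hδ1 hs1
  apply Prod.ext
  · apply Subtype.ext
    show (‖(((r / ‖q‖ : ℝ) : ℂ) * q)‖ : ℂ) * (s / ((r : ℝ) : ℂ)) = s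
    rw [hp_abs, mul_div_assoc', mul_comm, mul_div_assoc, div_self, mul_one]
    exact Complex.ofReal_ne_zero.mpr (ne_of_gt hr0)
  · apply Subtype.ext
    show ((lamF δ (‖(((r / ‖q‖ : ℝ) : ℂ) * q)‖
            * ‖(s / ((r : ℝ) : ℂ))‖)
          (‖(((r / ‖q‖ : ℝ) : ℂ) * q)‖)
          / ‖(((r / ‖q‖ : ℝ) : ℂ) * q)‖ : ℝ) : ℂ)
        * (((r / ‖q‖ : ℝ) : ℂ) * q) = q
    rw [hp_abs, ht_abs, hσ', hL, ← mul_assoc, ← Complex.ofReal_mul]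
    have : ‖q‖ / r * (r / ‖q‖) = 1 := by
      field_simp
    rw [this]
    simp

lemma continuous_piMap : Continuous (piMap δ) := by
  apply Continuous.subtype_mk
  exact (Complex.continuous_ofReal.comp (continuous_norm.comp
    (continuous_subtype_val.comp continuous_snd))).mul
    (continuous_subtype_val.comp continuous_fst)

lemma continuous_fwd : Continuous (fwd δ hδ0 hδ1) := by
  have hab1 : Continuous fun x : unitDisc × annulus δ => ‖(x.1 : ℂ)‖ :=
    continuous_norm.comp (continuous_subtype_val.comp continuous_fst)
  have hab2 : Continuous fun x : unitDisc × annulus δ => ‖(x.2 : ℂ)‖ :=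
    continuous_norm.comp (continuous_subtype_val.comp continuous_snd)
  have hσc : Continuous fun x : unitDisc × annulus δ =>
      ‖(x.2 : ℂ)‖ * ‖(x.1 : ℂ)‖ := hab2.mul hab1
  have hmaxc : Continuous fun x : unitDisc × annulus δ =>
      max δ (‖(x.2 : ℂ)‖ * ‖(x.1 : ℂ)‖) := continuous_const.max hσc
  have hne : ∀ x : unitDisc × annulus δ,
      (1 : ℝ) - max δ (‖(x.2 : ℂ)‖ * ‖(x.1 : ℂ)‖) ≠ 0 := by
    intro x
    have h1 : ‖(x.1 : ℂ)‖ < 1 := x.1.2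
    have h2 : ‖(x.2 : ℂ)‖ < 1 := x.2.2.2
    have hσ : ‖(x.2 : ℂ)‖ * ‖(x.1 : ℂ)‖ < 1 := by
      nlinarith [norm_nonneg (x.1 : ℂ), norm_nonneg (x.2 : ℂ)]
    have := max_lt hδ1 hσ
    intro h; linarith
  have hLc : Continuous fun x : unitDisc × annulus δ =>
      lamF δ (‖(x.2 : ℂ)‖ * ‖(x.1 : ℂ)‖) (‖(x.2 : ℂ)‖) := by
    unfold lamF
    exact continuous_const.add
      (((continuous_const.mul (hab2.sub hmaxc)).div (continuous_const.sub hmaxc) hne))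
  have hp0 : ∀ x : unitDisc × annulus δ, ‖(x.2 : ℂ)‖ ≠ 0 := fun x =>
    ne_of_gt (lt_trans hδ0 x.2.2.1)
  refine Continuous.prodMk (continuous_piMap δ) ?_
  apply Continuous.subtype_mk
  exact (Complex.continuous_ofReal.comp (hLc.div hab2 hp0)).mul
    (continuous_subtype_val.comp continuous_snd)

lemma continuous_bwd : Continuous (bwd δ hδ0 hδ1) := by
  have hab1 : Continuous fun y : unitDisc × annulus δ => ‖(y.1 : ℂ)‖ :=
    continuous_norm.comp (continuous_subtype_val.comp continuous_fst)
  have hab2 : Continuous fun y : unitDisc × annulus δ => ‖(y.2 : ℂ)‖ :=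
    continuous_norm.comp (continuous_subtype_val.comp continuous_snd)
  have hmaxc : Continuous fun y : unitDisc × annulus δ =>
      max δ (‖(y.1 : ℂ)‖) := continuous_const.max hab1
  have hrc : Continuous fun y : unitDisc × annulus δ =>
      muF δ (‖(y.1 : ℂ)‖) (‖(y.2 : ℂ)‖) := by
    unfold muF
    have h2 : (1 : ℝ) - δ ≠ 0 := by intro h; linarith
    exact hmaxc.add (((continuous_const.sub hmaxc).mul (hab2.sub continuous_const)).div_const _)
  have hr0 : ∀ y : unitDisc × annulus δ,
      muF δ (‖(y.1 : ℂ)‖) (‖(y.2 : ℂ)‖) ≠ 0 := by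
    intro y
    obtain ⟨hr1, _⟩ := muF_bounds (σ := ‖(y.1 : ℂ)‖) hδ0 hδ1 y.1.2 y.2.2.1 y.2.2.2
    exact ne_of_gt (lt_of_lt_of_le hδ0 (le_trans (le_max_left _ _) (le_of_lt hr1)))
  have hq0 : ∀ y : unitDisc × annulus δ, ‖(y.2 : ℂ)‖ ≠ 0 := fun y =>
    ne_of_gt (lt_trans hδ0 y.2.2.1)
  refine Continuous.prodMk ?_ ?_
  · apply Continuous.subtype_mk
    exact (continuous_subtype_val.comp continuous_fst).div
      (Complex.continuous_ofReal.comp hrc)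
      (fun y => Complex.ofReal_ne_zero.mpr (hr0 y))
  · apply Continuous.subtype_mk
    exact (Complex.continuous_ofReal.comp (hrc.div hab2 hq0)).mul
      (continuous_subtype_val.comp continuous_snd)

/-- The global trivialization of `piMap`. -/
noncomputable def triv : (unitDisc × annulus δ) ≃ₜ (unitDisc × annulus δ) where
  toFun := fwd δ hδ0 hδ1
  invFun := bwd δ hδ0 hδ1
  left_inv := fwd_bwd δ hδ0 hδ1
  right_inv := bwd_fwd δ hδ0 hδ1
  continuous_toFun := continuous_fwd δ hδ0 hδ1
  continuous_invFun := continuous_bwd δ hδ0 hδ1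

end Triv

theorem stmt11 (δ : ℝ) (hδ0 : 0 < δ) (hδ1 : δ < 1) :
    ∀ s₀ : unitDisc, ∃ U : Set unitDisc, IsOpen U ∧ s₀ ∈ U ∧
      ∃ H : (piMap δ ⁻¹' U) ≃ₜ (U × annulus δ),
        ∀ x : (piMap δ ⁻¹' U), ((H x).1 : unitDisc) = piMap δ (x : unitDisc × annulus δ) := by
  intro s₀
  refine ⟨Set.univ, isOpen_univ, trivial, ?_⟩
  refine ⟨(Homeomorph.setCongr (Set.preimage_univ)).trans
    ((Homeomorph.Set.univ _).trans ((triv δ hδ0 hδ1).trans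
      ((Homeomorph.Set.univ unitDisc).symm.prodCongr (Homeomorph.refl _)))), ?_⟩
  intro x
  rfl
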